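/- For n ≥ 0 and t > 0, the Bessel polynomial satisfies y_n(t) = ∫_0^∞ u^n · exp(−(u−1)²/(2tu))/√(2πtu) du, where y_n(t) = Σ_{j=0}^n ((n+j)!/(j!(n−j)!)) (t/2)^j. In particular, exp(−(u−1)²/(2tu))/√(2πtu) is a probability density on (0,∞) (case n = 0, since y_0 = 1). -/

import Mathlib

set_option maxHeartbeats 1000000

open Real MeasureTheory Filter Set

/-- The Bessel polynomials. -/
noncomputable def y (n : ℕ) (t : ℝ) : ℝ :=
  ∑ j ∈ Finset.range (n + 1),
    ((n + j).factorial : ℝ) / (j.factorial * (n - j).factorial) * (t / 2) ^ j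

noncomputable def gI (t a : ℝ) : ℝ := ∫ x : ℝ, Real.exp (a * x - (Real.cosh x - 1) / t)

lemma cosh_sub_one_ge (x : ℝ) : x ^ 2 / 2 ≤ Real.cosh x - 1 := by
  have h1 : Real.cosh x = 1 + 2 * Real.sinh (x / 2) ^ 2 := by
    have := Real.cosh_two_mul (x / 2)
    have h2 := Real.cosh_sq (x / 2)
    rw [show 2 * (x / 2) = x by ring] at this
    rw [this, h2]; ring
  have h3 : |x / 2| ≤ Real.sinh |x / 2| := Real.self_le_sinh_iff.2 (abs_nonneg _)
  have h4 : (x / 2) ^ 2 ≤ Real.sinh (x / 2) ^ 2 := by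
    rw [← sq_abs (x / 2), ← sq_abs (Real.sinh (x / 2)), Real.abs_sinh]
    exact pow_le_pow_left₀ (abs_nonneg _) h3 2
  nlinarith [h4]

lemma exponent_le (a t x : ℝ) (ht : 0 < t) :
    a * x - (Real.cosh x - 1) / t ≤ a ^ 2 * t - x ^ 2 / (4 * t) := by
  have h2 : x ^ 2 / (2 * t) ≤ (Real.cosh x - 1) / t := by
    rw [show x ^ 2 / (2 * t) = x ^ 2 / 2 / t by ring]
    gcongr
    exact cosh_sub_one_ge x
  have h3 : a * x ≤ a ^ 2 * t + x ^ 2 / (4 * t) := by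
    rw [← sub_nonneg, show a ^ 2 * t + x ^ 2 / (4 * t) - a * x = (2*a*t - x)^2/(4*t) by
      field_simp; ring]
    positivity
  have e2 : x ^ 2 / (2 * t) - x ^ 2 / (4 * t) = x ^ 2 / (4 * t) := by field_simp; ring
  linarith

lemma integrable_gI (t a : ℝ) (ht : 0 < t) :
    Integrable (fun x : ℝ => Real.exp (a * x - (Real.cosh x - 1) / t)) := by
  have hc : Continuous fun x : ℝ => Real.exp (a * x - (Real.cosh x - 1) / t) :=
    ((continuous_const.mul continuous_id).sub
      ((Real.continuous_cosh.sub continuous_const).div_const t)).rexp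
  refine Integrable.mono'
    (((integrable_exp_neg_mul_sq (show (0:ℝ) < 1/(4*t) by positivity)).const_mul
      (Real.exp (a ^ 2 * t)))) hc.aestronglyMeasurable (ae_of_all _ fun x => ?_)
  rw [Real.norm_eq_abs, abs_exp, ← Real.exp_add]
  apply Real.exp_le_exp.2
  have h := exponent_le a t x ht
  have e : a ^ 2 * t + -(1 / (4 * t)) * x ^ 2 = a ^ 2 * t - x ^ 2 / (4 * t) := by ring
  linarith


lemma integral_comp_neg_real (f : ℝ → ℝ) : ∫ x : ℝ, f (-x) = ∫ x : ℝ, f x := by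
  have A : MeasurableEmbedding fun x : ℝ => -x := (Homeomorph.neg ℝ).measurableEmbedding
  have h := A.integral_map (μ := volume) (g := f)
  rw [Measure.map_neg_eq_self] at h
  exact h.symm

lemma gI_symm (t a : ℝ) : gI t (-a) = gI t a := by
  unfold gI
  rw [← integral_comp_neg_real (fun x => Real.exp (a * x - (Real.cosh x - 1) / t))]
  congr 1; ext x; rw [Real.cosh_neg]; ring_nf

lemma gI_rec (t a : ℝ) (ht : 0 < t) :
    gI t (a + 1) = 2 * t * a * gI t a + gI t (a - 1) := by
  have hderiv : ∀ x : ℝ, HasDerivAt (fun x => Real.exp (a * x - (Real.cosh x - 1) / t))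
      ((a - Real.sinh x / t) * Real.exp (a * x - (Real.cosh x - 1) / t)) x := by
    intro x
    have h1 : HasDerivAt (fun x : ℝ => a * x - (Real.cosh x - 1) / t)
        (a - Real.sinh x / t) x := by
      have := ((hasDerivAt_id x).const_mul a).sub
        (((Real.hasDerivAt_cosh x).sub_const 1).div_const t)
      exact this.congr_deriv (by simp)
    simpa [mul_comm] using h1.exp
  have hsplit : (fun x => (a - Real.sinh x / t) * Real.exp (a * x - (Real.cosh x - 1) / t))
      = fun x => a * Real.exp (a * x - (Real.cosh x - 1) / t)
      - (1 / (2 * t)) * Real.exp ((a + 1) * x - (Real.cosh x - 1) / t)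
      + (1 / (2 * t)) * Real.exp ((a - 1) * x - (Real.cosh x - 1) / t) := by
    funext x
    have e1 : Real.exp ((a + 1) * x - (Real.cosh x - 1) / t)
        = Real.exp (a * x - (Real.cosh x - 1) / t) * Real.exp x := by
      rw [← Real.exp_add]; ring_nf
    have e2 : Real.exp ((a - 1) * x - (Real.cosh x - 1) / t)
        = Real.exp (a * x - (Real.cosh x - 1) / t) * Real.exp (-x) := by
      rw [← Real.exp_add]; ring_nf
    rw [e1, e2, Real.sinh_eq]
    field_simp
    ring
  have hint : Integrable (fun x => (a - Real.sinh x / t)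
      * Real.exp (a * x - (Real.cosh x - 1) / t)) := by
    rw [hsplit]
    exact (((integrable_gI t a ht).const_mul a).sub
      ((integrable_gI t (a+1) ht).const_mul (1/(2*t)))).add
      ((integrable_gI t (a-1) ht).const_mul (1/(2*t)))
  have htend : ∀ l : Filter ℝ, Tendsto (fun x : ℝ => x ^ 2) l atTop →
      Tendsto (fun x => Real.exp (a * x - (Real.cosh x - 1) / t)) l (nhds 0) := by
    intro l hl
    apply Real.tendsto_exp_atBot.comp
    apply tendsto_atBot_mono (fun x => exponent_le a t x ht)
    rw [show (fun x : ℝ => a ^ 2 * t - x ^ 2 / (4 * t)) =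
        (fun x : ℝ => a ^ 2 * t + -(x ^ 2 / (4 * t))) by ext x; ring]
    apply tendsto_atBot_add_const_left
    apply tendsto_neg_atTop_atBot.comp
    exact (hl.atTop_div_const (by positivity))
  have htop := htend atTop (tendsto_pow_atTop two_ne_zero)
  have hbot : Tendsto (fun x => Real.exp (a * x - (Real.cosh x - 1) / t)) atBot (nhds 0) := by
    apply htend atBot
    have := (tendsto_pow_atTop (n := 2) two_ne_zero).comp (tendsto_neg_atBot_atTop (G := ℝ))
    simpa [Function.comp_def, neg_sq] using this
  have hFTC : ∫ x, (a - Real.sinh x / t)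
      * Real.exp (a * x - (Real.cosh x - 1) / t) = 0 := by
    rw [MeasureTheory.integral_of_hasDerivAt_of_tendsto hderiv hint hbot htop]
    simp
  have hA : Integrable (fun x => a * Real.exp (a * x - (Real.cosh x - 1) / t)) :=
    (integrable_gI t a ht).const_mul a
  have hB : Integrable (fun x => (1/(2*t)) * Real.exp ((a+1) * x - (Real.cosh x - 1) / t)) :=
    (integrable_gI t (a+1) ht).const_mul _
  have hC : Integrable (fun x => (1/(2*t)) * Real.exp ((a-1) * x - (Real.cosh x - 1) / t)) :=
    (integrable_gI t (a-1) ht).const_mul _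
  rw [hsplit] at hFTC
  have key : (∫ x, (a * Real.exp (a * x - (Real.cosh x - 1) / t)
        - (1/(2*t)) * Real.exp ((a+1) * x - (Real.cosh x - 1) / t)
        + (1/(2*t)) * Real.exp ((a-1) * x - (Real.cosh x - 1) / t)))
      = (∫ x, (a * Real.exp (a * x - (Real.cosh x - 1) / t)
        - (1/(2*t)) * Real.exp ((a+1) * x - (Real.cosh x - 1) / t)))
        + ∫ x, (1/(2*t)) * Real.exp ((a-1) * x - (Real.cosh x - 1) / t) :=
    MeasureTheory.integral_add (hA.sub hB) hC
  have key2 : (∫ x, (a * Real.exp (a * x - (Real.cosh x - 1) / t)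
        - (1/(2*t)) * Real.exp ((a+1) * x - (Real.cosh x - 1) / t)))
      = (∫ x, a * Real.exp (a * x - (Real.cosh x - 1) / t))
        - ∫ x, (1/(2*t)) * Real.exp ((a+1) * x - (Real.cosh x - 1) / t) :=
    MeasureTheory.integral_sub hA hB
  have k3 : (∫ x, a * Real.exp (a * x - (Real.cosh x - 1) / t)) = a * gI t a :=
    MeasureTheory.integral_const_mul a _
  have k4 : (∫ x, (1/(2*t)) * Real.exp ((a+1) * x - (Real.cosh x - 1) / t))
      = (1/(2*t)) * gI t (a+1) := MeasureTheory.integral_const_mul _ _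
  have k5 : (∫ x, (1/(2*t)) * Real.exp ((a-1) * x - (Real.cosh x - 1) / t))
      = (1/(2*t)) * gI t (a-1) := MeasureTheory.integral_const_mul _ _
  rw [key, key2, k3, k4, k5] at hFTC
  have h1 : a * gI t a - 1 / (2*t) * gI t (a+1) + 1/(2*t) * gI t (a-1) = 0 := hFTC
  field_simp at h1
  linarith

lemma cosh_eq_one_add (x : ℝ) : Real.cosh x = 1 + 2 * Real.sinh (x / 2) ^ 2 := by
  have h := Real.cosh_two_mul (x / 2)
  have h2 := Real.cosh_sq (x / 2)
  rw [show 2 * (x / 2) = x by ring] at h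
  rw [h, h2]; ring

lemma gI_base (t : ℝ) (ht : 0 < t) : gI t (1/2) = Real.sqrt (2 * π * t) := by
  have hsum : gI t (1/2) + gI t (-(1/2))
      = ∫ x : ℝ, (Real.exp ((1/2) * x - (Real.cosh x - 1) / t)
        + Real.exp ((-(1/2)) * x - (Real.cosh x - 1) / t)) :=
    (MeasureTheory.integral_add (integrable_gI t (1/2) ht) (integrable_gI t (-(1/2)) ht)).symm
  have hdiv_inj : Function.Injective fun x : ℝ => x / 2 := fun a b h => by
    dsimp at h; linarith
  have hinj : Set.InjOn (fun x : ℝ => Real.sinh (x / 2)) Set.univ :=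
    (Real.sinh_injective.comp hdiv_inj).injOn
  have hsurj : Function.Surjective fun x : ℝ => Real.sinh (x / 2) := by
    intro y
    obtain ⟨z, hz⟩ := Real.sinh_surjective y
    exact ⟨2 * z, by simpa [mul_div_assoc] using hz⟩
  have himg : (fun x : ℝ => Real.sinh (x / 2)) '' Set.univ = Set.univ := by
    rw [Set.image_univ]; exact hsurj.range_eq
  have hderiv : ∀ x ∈ Set.univ, HasDerivWithinAt (fun x : ℝ => Real.sinh (x / 2))
      (Real.cosh (x / 2) * (1/2)) Set.univ x := by
    intro x _
    have h1 : HasDerivAt (fun x : ℝ => x / 2) (1/2) x := by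
      simpa using (hasDerivAt_id x).div_const 2
    exact ((Real.hasDerivAt_sinh (x / 2)).comp x h1).hasDerivWithinAt
  have hCV := MeasureTheory.integral_image_eq_integral_abs_deriv_smul MeasurableSet.univ
    hderiv hinj (fun y => 4 * Real.exp (-(2/t) * y ^ 2))
  rw [himg, Measure.restrict_univ] at hCV
  have hrhs : (∫ x : ℝ, |Real.cosh (x / 2) * (1/2)| • (4 * Real.exp (-(2/t) * Real.sinh (x / 2) ^ 2)))
      = ∫ x : ℝ, (Real.exp ((1/2) * x - (Real.cosh x - 1) / t)
        + Real.exp ((-(1/2)) * x - (Real.cosh x - 1) / t)) := by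
    congr 1; funext x
    have hpos : (0:ℝ) < Real.cosh (x / 2) := Real.cosh_pos _
    rw [smul_eq_mul, abs_of_pos (by positivity)]
    have e1 : Real.exp ((1/2) * x - (Real.cosh x - 1) / t)
        = Real.exp (x/2) * Real.exp (-(Real.cosh x - 1) / t) := by
      rw [← Real.exp_add]; ring_nf
    have e2 : Real.exp ((-(1/2)) * x - (Real.cosh x - 1) / t)
        = Real.exp (-(x/2)) * Real.exp (-(Real.cosh x - 1) / t) := by
      rw [← Real.exp_add]; ring_nf
    have e3 : -(2/t) * Real.sinh (x / 2) ^ 2 = -(Real.cosh x - 1) / t := by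
      rw [cosh_eq_one_add x]; field_simp; ring
    rw [e1, e2, e3, Real.cosh_eq]
    ring
  have hlhs : (∫ y : ℝ, 4 * Real.exp (-(2/t) * y ^ 2)) = 4 * Real.sqrt (π / (2/t)) := by
    rw [MeasureTheory.integral_const_mul, integral_gaussian]
  rw [hrhs] at hCV
  have h2 : 2 * gI t (1/2) = 4 * Real.sqrt (π / (2/t)) := by
    rw [two_mul]
    nth_rewrite 2 [← gI_symm t (1/2)]
    rw [hsum, ← hCV, hlhs]
  have e4 : π / (2/t) = π * t / 2 := by field_simp
  have e5 : Real.sqrt (2 * π * t) = 2 * Real.sqrt (π * t / 2) := by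
    rw [show 2 * π * t = 4 * (π * t / 2) by ring, show (4:ℝ) = 2^2 by norm_num,
      Real.sqrt_mul (by positivity), Real.sqrt_sq (by norm_num : (0:ℝ) ≤ 2)]
  rw [e5]
  rw [e4] at h2
  linarith

lemma y_zero (t : ℝ) : y 0 t = 1 := by simp [y]

lemma y_one (t : ℝ) : y 1 t = 1 + t := by
  simp [y, Finset.sum_range_succ, Nat.factorial]
  ring

lemma sum_shuffle (F G H : ℕ → ℝ) (n : ℕ) (c : ℝ)
    (h0 : F 0 = H 0)
    (hmid : ∀ j < n, F (j+1) = c * G j + H (j+1))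
    (he1 : F (n+1) = c * G n)
    (he2 : F (n+2) = c * G (n+1)) :
    ∑ j ∈ Finset.range (n+3), F j
      = c * ∑ j ∈ Finset.range (n+2), G j + ∑ j ∈ Finset.range (n+1), H j := by
  have h1 : ∑ j ∈ Finset.range n, F (j+1) = ∑ j ∈ Finset.range n, (c * G j + H (j+1)) :=
    Finset.sum_congr rfl (fun j hj => hmid j (Finset.mem_range.mp hj))
  rw [show n+3 = (n+2)+1 from rfl, Finset.sum_range_succ (f := F),
    show n+2 = (n+1)+1 from rfl, Finset.sum_range_succ (f := F),
    Finset.sum_range_succ' F, h1, Finset.sum_add_distrib, ← Finset.mul_sum,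
    Finset.sum_range_succ (f := G), Finset.sum_range_succ (f := G),
    Finset.sum_range_succ' H, h0, he1, he2]
  ring

lemma y_rec (n : ℕ) (t : ℝ) :
    y (n+2) t = (2*(n:ℝ)+3) * t * y (n+1) t + y n t := by
  unfold y
  refine sum_shuffle _ _ _ n ((2*(n:ℝ)+3) * t) ?_ ?_ ?_ ?_
  · norm_num [div_self, Nat.factorial_ne_zero]
  · intro j hj
    obtain ⟨m, rfl⟩ : ∃ m, n = j + 1 + m := ⟨n - j - 1, by omega⟩
    have hj1 : ((j:ℝ)+1) ≠ 0 := by positivity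
    have hfj : ((j.factorial : ℝ)) ≠ 0 := Nat.cast_ne_zero.mpr (Nat.factorial_ne_zero j)
    have hfm : ((m.factorial : ℝ)) ≠ 0 := Nat.cast_ne_zero.mpr (Nat.factorial_ne_zero m)
    rw [show j + 1 + m + 2 + (j + 1) = (2*j+m+2)+1+1 by omega,
      show j + 1 + m + 2 - (j + 1) = m+1+1 by omega,
      show j + 1 + m + 1 + j = 2*j+m+2 by omega,
      show j + 1 + m + 1 - j = m+1+1 by omega,
      show j + 1 + m + (j + 1) = 2*j+m+2 by omega,
      show j + 1 + m - (j + 1) = m by omega,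
      Nat.factorial_succ ((2*j+m+2)+1), Nat.factorial_succ (2*j+m+2),
      Nat.factorial_succ (m+1), Nat.factorial_succ m, Nat.factorial_succ j]
    push_cast
    field_simp
    ring
  · obtain ⟨k, hk⟩ : ∃ k, k = 2*n+1 := ⟨_, rfl⟩
    rw [show n + 2 + (n + 1) = k+1+1 by omega,
      show n + 2 - (n + 1) = 1 by omega,
      show n + 1 + n = k by omega,
      show n + 1 - n = 1 by omega,
      Nat.factorial_succ (k+1), Nat.factorial_succ k, Nat.factorial_one,
      Nat.factorial_succ n]
    have hfn : ((n.factorial : ℝ)) ≠ 0 := Nat.cast_ne_zero.mpr (Nat.factorial_ne_zero n)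
    have hk' : (k:ℝ) = 2*n+1 := by rw [hk]; push_cast; ring
    push_cast [hk']
    field_simp
    ring
  · obtain ⟨k, hk⟩ : ∃ k, k = 2*n+2 := ⟨_, rfl⟩
    rw [show n + 2 + (n + 2) = k+1+1 by omega,
      show n + 2 - (n + 2) = 0 by omega,
      show n + 1 + (n + 1) = k by omega,
      show n + 1 - (n + 1) = 0 by omega,
      Nat.factorial_succ (k+1), Nat.factorial_succ k, Nat.factorial_zero,
      show n + 2 = (n+1)+1 by omega, Nat.factorial_succ (n+1)]
    have hfn : (((n+1).factorial : ℝ)) ≠ 0 := Nat.cast_ne_zero.mpr (Nat.factorial_ne_zero _)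
    have hk' : (k:ℝ) = 2*n+2 := by rw [hk]; push_cast; ring
    push_cast [hk']
    field_simp
    ring

lemma subst_exp (n : ℕ) (t : ℝ) (ht : 0 < t) :
    ∫ u in Set.Ioi (0 : ℝ),
        u ^ n * (Real.exp (-(u - 1) ^ 2 / (2 * t * u)) / Real.sqrt (2 * π * t * u))
      = gI t ((n : ℝ) + 1/2) / Real.sqrt (2 * π * t) := by
  have hderiv : ∀ x ∈ Set.univ, HasDerivWithinAt Real.exp (Real.exp x) Set.univ x :=
    fun x _ => (Real.hasDerivAt_exp x).hasDerivWithinAt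
  have hCV := MeasureTheory.integral_image_eq_integral_abs_deriv_smul MeasurableSet.univ
    hderiv Real.exp_injective.injOn
    (fun u => u ^ n * (Real.exp (-(u - 1) ^ 2 / (2 * t * u)) / Real.sqrt (2 * π * t * u)))
  rw [Set.image_univ, Real.range_exp, Measure.restrict_univ] at hCV
  rw [hCV]
  unfold gI
  rw [← MeasureTheory.integral_div]
  congr 1
  funext x
  have hex : Real.exp x ≠ 0 := Real.exp_ne_zero x
  have hq : -(Real.exp x - 1) ^ 2 / (2 * t * Real.exp x) = -(Real.cosh x - 1) / t := by
    rw [Real.cosh_eq, Real.exp_neg]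
    field_simp
    ring
  have hs : Real.sqrt (2 * π * t * Real.exp x) = Real.sqrt (2 * π * t) * Real.exp (x / 2) := by
    rw [Real.sqrt_mul (by positivity), ← Real.exp_half]
  have hsne : Real.sqrt (2 * π * t) ≠ 0 := by positivity
  have key : Real.exp (-(Real.cosh x - 1)/t) / (Real.sqrt (2*π*t) * Real.exp (x/2))
      = Real.exp (-(Real.cosh x - 1)/t - x/2) / Real.sqrt (2*π*t) := by
    rw [Real.exp_sub, div_div, mul_comm]
  rw [smul_eq_mul, abs_of_pos (Real.exp_pos x), hq, hs, ← Real.exp_nat_mul, key,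
    ← mul_div_assoc, ← mul_div_assoc]
  congr 1
  rw [← Real.exp_add, ← Real.exp_add]
  congr 1
  ring

lemma gI_eq (n : ℕ) (t : ℝ) (ht : 0 < t) :
    gI t ((n : ℝ) + 1/2) = Real.sqrt (2 * π * t) * y n t := by
  suffices h : ∀ n : ℕ, gI t ((n : ℝ) + 1/2) = Real.sqrt (2 * π * t) * y n t ∧
      gI t (((n+1 : ℕ) : ℝ) + 1/2) = Real.sqrt (2 * π * t) * y (n+1) t from (h n).1
  intro n
  induction n with
  | zero =>
    constructor
    · rw [show ((0:ℕ):ℝ) + 1/2 = 1/2 by norm_num, gI_base t ht, y_zero, mul_one]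
    · have h := gI_rec t (1/2) ht
      rw [show (1:ℝ)/2 - 1 = -(1/2) by norm_num, gI_symm] at h
      rw [show ((0+1:ℕ):ℝ) + 1/2 = 1/2 + 1 by norm_num, h, gI_base t ht, y_one]
      ring
  | succ n ih =>
    refine ⟨ih.2, ?_⟩
    have h := gI_rec t ((n:ℝ)+1+1/2) ht
    rw [show (n:ℝ)+1+1/2 - 1 = (n:ℝ)+1/2 by ring] at h
    have e1 : ((n+1+1:ℕ):ℝ) + 1/2 = ((n:ℝ)+1+1/2) + 1 := by push_cast; ring
    have e2 : (n:ℝ)+1+1/2 = ((n+1:ℕ):ℝ) + 1/2 := by push_cast; ring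
    rw [e1, h, e2, ih.2, ih.1, show n+1+1 = n+2 from rfl, y_rec n t]
    rw [← e2]
    ring

theorem stmt_18 (n : ℕ) (t : ℝ) (ht : 0 < t) :
    ∫ u in Set.Ioi (0 : ℝ),
        u ^ n * (Real.exp (-(u - 1) ^ 2 / (2 * t * u)) / Real.sqrt (2 * π * t * u))
      = y n t := by
  rw [subst_exp n t ht, gI_eq n t ht]
  exact mul_div_cancel_left₀ _ (by positivity)
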